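/- If ψ is a truth-conditional formula of L, then for every formula φ of L the implication φ→ψ is truth-conditional. In particular, every negation ¬φ = φ→⊥ is truth-conditional. -/
import Mathlib


/-- Formulas of the language L: atoms, ⊥, ∧, ∨, →, and inquisitive disjunction ⩾. -/
inductive Formula (P : Type) : Type
  | atom : P → Formula P
  | bot  : Formula P
  | and  : Formula P → Formula P → Formula P
  | or   : Formula P → Formula P → Formula P
  | impl : Formula P → Formula P → Formula P
  | iorr : Formula P → Formula P → Formula P

namespace Formula

/-- Negation ¬φ := φ → ⊥. -/
def neg {P : Type} (φ : Formula P) : Formula P := Formula.impl φ Formula.bot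

/-- Polar question ?φ := φ ⩾ ¬φ. -/
def question {P : Type} (φ : Formula P) : Formula P := Formula.iorr φ φ.neg

/-- A standard formula contains no occurrence of inquisitive disjunction ⩾. -/
def standard {P : Type} : Formula P → Prop
  | atom _ => True
  | bot => True
  | and φ ψ => φ.standard ∧ ψ.standard
  | or φ ψ => φ.standard ∧ ψ.standard
  | impl φ ψ => φ.standard ∧ ψ.standard
  | iorr _ _ => False

end Formula

/-- An intuitionistic Kripke model: a partially ordered set of worlds with a
persistent valuation. -/
structure KripkeModel (P : Type) where
  W : Type
  R : W → W → Prop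
  refl : ∀ w, R w w
  antisymm : ∀ w v, R w v → R v w → w = v
  trans : ∀ w v u, R w v → R v u → R w u
  V : W → P → Prop
  persistent : ∀ w v p, R w v → V w p → V v p

/-- R[t], the up-set generated by a team t. -/
def KripkeModel.upset {P : Type} (M : KripkeModel P) (t : Set M.W) : Set M.W :=
  {v | ∃ w ∈ t, M.R w v}

/-- The support relation M,t ⊨ φ between teams and formulas. -/
def support {P : Type} (M : KripkeModel P) : Formula P → Set M.W → Prop
  | .atom p, t => ∀ w ∈ t, M.V w p
  | .bot, t => t = ∅
  | .and φ ψ, t => support M φ t ∧ support M ψ t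
  | .or φ ψ, t => ∃ t₁ t₂, t = t₁ ∪ t₂ ∧ support M φ t₁ ∧ support M ψ t₂
  | .impl φ ψ, t => ∀ t', t' ⊆ M.upset t → support M φ t' → support M ψ t'
  | .iorr φ ψ, t => support M φ t ∨ support M ψ t

/-- Truth at a world: M,w ⊨ φ iff M,{w} ⊨ φ. -/
def truth {P : Type} (M : KripkeModel P) (w : M.W) (φ : Formula P) : Prop :=
  support M φ {w}

/-- A formula is truth-conditional if support at a team amounts to truth at each world. -/
def truthConditional {P : Type} (φ : Formula P) : Prop :=
  ∀ (M : KripkeModel P) (t : Set M.W), support M φ t ↔ ∀ w ∈ t, truth M w φ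

/-- The partial truth-value function: `tvalIs M w φ b` says T(w,φ) is defined with value b
(b = true for value 1, i.e. M,w ⊨ φ; b = false for value 0, i.e. M,w ⊨ ¬φ). -/
def tvalIs {P : Type} (M : KripkeModel P) (w : M.W) (φ : Formula P) : Bool → Prop
  | true => truth M w φ
  | false => truth M w φ.neg

lemma support_mono {P : Type} (M : KripkeModel P) (φ : Formula P) :
    ∀ t s : Set M.W, s ⊆ t → support M φ t → support M φ s := by
  induction φ with
  | atom p => intro t s hs h w hw; exact h w (hs hw)
  | bot => intro t s hs h; subst h; exact Set.subset_eq_empty hs rfl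
  | and φ ψ ihφ ihψ => intro t s hs h; exact ⟨ihφ t s hs h.1, ihψ t s hs h.2⟩
  | or φ ψ ihφ ihψ =>
      intro t s hs h
      obtain ⟨t₁, t₂, rfl, h₁, h₂⟩ := h
      refine ⟨s ∩ t₁, s ∩ t₂, ?_, ihφ t₁ _ (Set.inter_subset_right) h₁,
        ihψ t₂ _ (Set.inter_subset_right) h₂⟩
      rw [← Set.inter_union_distrib_left]
      exact (Set.inter_eq_left.mpr hs).symm
  | impl φ ψ ihφ ihψ =>
      intro t s hs h t' ht' hφ
      exact h t' (fun v hv => by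
        obtain ⟨w, hw, hr⟩ := ht' hv; exact ⟨w, hs hw, hr⟩) hφ
  | iorr φ ψ ihφ ihψ =>
      intro t s hs h
      cases h with
      | inl h => exact Or.inl (ihφ t s hs h)
      | inr h => exact Or.inr (ihψ t s hs h)

/-- if ψ is truth-conditional then so is φ → ψ for every φ;
in particular every negation ¬φ = φ → ⊥ is truth-conditional. -/
theorem impl_truthConditional {P : Type} :
    (∀ ψ : Formula P, truthConditional ψ →
      ∀ φ : Formula P, truthConditional (Formula.impl φ ψ)) ∧
    (∀ φ : Formula P, truthConditional φ.neg) := by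
  have main : ∀ ψ : Formula P, truthConditional ψ →
      ∀ φ : Formula P, truthConditional (Formula.impl φ ψ) := by
    intro ψ hψ φ M t
    constructor
    · intro h w hw t' ht' hφ
      refine h t' (fun v hv => ?_) hφ
      obtain ⟨u, hu, hr⟩ := ht' hv
      rcases hu with rfl
      exact ⟨u, hw, hr⟩
    · intro h t' ht' hφ
      refine (hψ M t').mpr (fun v hv => ?_)
      obtain ⟨w, hw, hr⟩ := ht' hv
      have hφv : support M φ {v} :=
        support_mono M φ t' {v} (by simpa using hv) hφ
      exact h w hw {v} (fun u hu => by
        rcases hu with rfl; exact ⟨w, rfl, hr⟩) hφv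
  have hbot : truthConditional (Formula.bot : Formula P) := by
    intro M t
    constructor
    · intro h w hw; subst h; exact absurd hw (Set.notMem_empty w)
    · intro h
      ext w
      simp only [Set.mem_empty_iff_false, iff_false]
      intro hw
      have := h w hw
      exact absurd this (by simp [truth, support, Set.singleton_ne_empty])
  exact ⟨main, fun φ => main Formula.bot hbot φ⟩
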